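/- Suppose χ(F) = k+1, H is weakly asymptotically F-Turán-good, and H is weakly K_{k+1}-Turán-stable. Then H is weakly F-Turán-stable: any n-vertex F-free graph G with N(H,G) ≥ ex(n,H,F) − o(n^{|V(H)|}) can be obtained from some complete k-partite graph by adding and removing o(n²) edges. (The proof may assume as hypotheses the graph removal lemma and the fact ex(n,K_{k+1},F) = o(n^{k+1}).) -/

import Mathlib

open SimpleGraph Filter Asymptotics Finset

/-- The set of copies of `H` in `G`: subgraphs of `G` isomorphic to `H`. -/
def SimpleGraph.copySet {α V : Type*} (H : SimpleGraph α) (G : SimpleGraph V) :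
    Set G.Subgraph := {C | Nonempty (H ≃g C.coe)}

/-- The number of (unlabeled) copies of `H` in `G`, i.e. `N(H,G)`. -/
noncomputable def copyCount {α V : Type*} (H : SimpleGraph α) (G : SimpleGraph V) : ℕ :=
  (H.copySet G).ncard

/-- `G` is `F`-free: it contains no subgraph isomorphic to `F`. -/
def FFree {β V : Type*} (F : SimpleGraph β) (G : SimpleGraph V) : Prop := F.copySet G = ∅

/-- The generalized Turán number `ex(n, H, F)`. -/
noncomputable def exGen {α β : Type*} (n : ℕ) (H : SimpleGraph α) (F : SimpleGraph β) : ℕ :=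
  sSup {m | ∃ G : SimpleGraph (Fin n), FFree F G ∧ copyCount H G = m}

/-- The complete multipartite graph with part sizes `a 0, …, a (k-1)`. -/
def CMP (k : ℕ) (a : Fin k → ℕ) : SimpleGraph (Σ i : Fin k, Fin (a i)) :=
  SimpleGraph.comap Sigma.fst ⊤

/-- `T` is a complete `k`-partite graph. -/
def IsCompleteMultipartite (k : ℕ) {V : Type*} (T : SimpleGraph V) : Prop :=
  ∃ p : V → Fin k, ∀ u v, T.Adj u v ↔ p u ≠ p v

/-- The edit distance between two graphs on the same vertex set. -/
noncomputable def editDist {V : Type*} (G T : SimpleGraph V) : ℕ :=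
  (symmDiff G.edgeSet T.edgeSet).ncard

/-! ### Auxiliary lemmas -/

set_option linter.unusedSectionVars false

instance subgraphFinite {V : Type*} [Finite V] (A : SimpleGraph V) : Finite A.Subgraph :=
  Finite.of_injective (fun C => (C.verts, C.Adj))
    (fun _ _ h => SimpleGraph.Subgraph.ext (congrArg Prod.fst h) (congrArg Prod.snd h))

lemma copyCount_le_bound {α : Type*} {n : ℕ} (H : SimpleGraph α) (G0 : SimpleGraph (Fin n)) :
    _root_.copyCount H G0 ≤ Nat.card (Set (Fin n) × (Fin n → Fin n → Prop)) := by
  calc _root_.copyCount H G0 ≤ (Set.univ : Set G0.Subgraph).ncard :=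
        Set.ncard_le_ncard (Set.subset_univ _) Set.finite_univ
  _ = Nat.card G0.Subgraph := Set.ncard_univ _
  _ ≤ _ := Nat.card_le_card_of_injective (fun C => (C.verts, C.Adj))
      (fun _ _ h => SimpleGraph.Subgraph.ext (congrArg Prod.fst h) (congrArg Prod.snd h))

lemma bddAbove_exSet {α β : Type*} {n : ℕ} (H : SimpleGraph α) (F : SimpleGraph β) :
    BddAbove {m | ∃ G : SimpleGraph (Fin n), FFree F G ∧ _root_.copyCount H G = m} := by
  refine ⟨Nat.card (Set (Fin n) × (Fin n → Fin n → Prop)), ?_⟩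
  rintro m ⟨G0, -, rfl⟩
  exact copyCount_le_bound H G0

lemma copyCount_le_exGen {α β : Type*} {n : ℕ} (H : SimpleGraph α) (F : SimpleGraph β)
    (G : SimpleGraph (Fin n)) (hfree : FFree F G) : _root_.copyCount H G ≤ exGen n H F :=
  le_csSup (bddAbove_exSet H F) ⟨G, hfree, rfl⟩

lemma exGen_attained {α β : Type*} {n : ℕ} (H : SimpleGraph α) (F : SimpleGraph β)
    (hne : ∃ G : SimpleGraph (Fin n), FFree F G) :
    ∃ G : SimpleGraph (Fin n), FFree F G ∧ _root_.copyCount H G = exGen n H F := by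
  obtain ⟨G0, hG0⟩ := hne
  exact Nat.sSup_mem (s := {m | ∃ G : SimpleGraph (Fin n), FFree F G ∧ _root_.copyCount H G = m})
    ⟨_root_.copyCount H G0, G0, hG0, rfl⟩ (bddAbove_exSet H F)

lemma bot_ffree {γ : Type*} {F' : SimpleGraph γ} {x y : γ} (hxy : F'.Adj x y) (n : ℕ) :
    FFree F' (⊥ : SimpleGraph (Fin n)) := by
  rw [FFree, Set.eq_empty_iff_forall_notMem]
  rintro C ⟨φ⟩
  have h2 : C.coe.Adj (φ x) (φ y) := φ.map_adj_iff.mpr hxy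
  exact C.adj_sub h2

lemma cmp_ffree {V γ : Type*} {F : SimpleGraph γ} {k : ℕ}
    (hχF : F.chromaticNumber = ((k : ℕ∞) + 1)) {T : SimpleGraph V}
    (hT : IsCompleteMultipartite k T) : FFree F T := by
  obtain ⟨p, hp⟩ := hT
  rw [FFree, Set.eq_empty_iff_forall_notMem]
  rintro C ⟨φ⟩
  have hcol : F.Colorable k :=
    ⟨SimpleGraph.Coloring.mk (fun x => p (φ x).1) (fun {x y} h => by
      have h2 : C.coe.Adj (φ x) (φ y) := φ.map_adj_iff.mpr h
      exact (hp _ _).mp (C.adj_sub h2))⟩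
  have h1 := hcol.chromaticNumber_le
  rw [hχF] at h1
  have h2 : (k + 1 : ℕ) ≤ k := by exact_mod_cast h1
  omega

section CopyFun
variable {α : Type*} [Fintype α] {H : SimpleGraph α} {n : ℕ} {A : SimpleGraph (Fin n)}

noncomputable def copyFun (H : SimpleGraph α) (A : SimpleGraph (Fin n))
    (C : H.copySet A) : α → Fin n :=
  fun x => ((C.2.some) x : Fin n)

lemma verts_eq_range (C : H.copySet A) : (C : A.Subgraph).verts = Set.range (copyFun H A C) := by
  ext u
  constructor
  · intro hu
    exact ⟨C.2.some.symm ⟨u, hu⟩, by simp [copyFun]⟩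
  · rintro ⟨x, rfl⟩
    exact (C.2.some x).2

lemma copy_adj_iff (C : H.copySet A) (u v : Fin n) :
    (C : A.Subgraph).Adj u v ↔
      ∃ x y, H.Adj x y ∧ copyFun H A C x = u ∧ copyFun H A C y = v := by
  constructor
  · intro h
    have hu : u ∈ (C : A.Subgraph).verts := (C : A.Subgraph).edge_vert h
    have hv : v ∈ (C : A.Subgraph).verts := (C : A.Subgraph).edge_vert h.symm
    refine ⟨C.2.some.symm ⟨u, hu⟩, C.2.some.symm ⟨v, hv⟩, ?_, by simp [copyFun], by simp [copyFun]⟩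
    have h3 : (C : A.Subgraph).coe.Adj ⟨u, hu⟩ ⟨v, hv⟩ := h
    exact C.2.some.symm.map_adj_iff.mpr h3
  · rintro ⟨x, y, hxy, rfl, rfl⟩
    have h3 : (C : A.Subgraph).coe.Adj (C.2.some x) (C.2.some y) := C.2.some.map_adj_iff.mpr hxy
    exact h3

lemma copyFun_inj : Function.Injective (copyFun H A) := by
  intro C C' h
  refine Subtype.ext (SimpleGraph.Subgraph.ext ?_ ?_)
  · rw [verts_eq_range C, verts_eq_range C', h]
  · funext u v
    exact propext ((copy_adj_iff C u v).trans (by rw [h]; exact (copy_adj_iff C' u v).symm))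

end CopyFun

/-- the set of "bad embeddings" of `H` -/
def BadF {α : Type*} (H : SimpleGraph α) {n : ℕ} (A B : SimpleGraph (Fin n)) :
    Set (α → Fin n) :=
  {f | ∃ x y, H.Adj x y ∧ A.Adj (f x) (f y) ∧ ¬ B.Adj (f x) (f y)}

lemma ncard_biUnion_le {X ι : Type*} [Finite X] (t : Finset ι) (s : ι → Set X) :
    (⋃ i ∈ t, s i).ncard ≤ ∑ i ∈ t, (s i).ncard := by
  classical
  induction t using Finset.induction with
  | empty => simp
  | insert a t hnotmem ih =>
    rw [Finset.set_biUnion_insert, Finset.sum_insert hnotmem]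
    exact (Set.ncard_union_le _ _).trans (Nat.add_le_add le_rfl ih)

section Counting
variable {α : Type*} [Fintype α] (H : SimpleGraph α) {n : ℕ} (A B : SimpleGraph (Fin n))

lemma count_le : _root_.copyCount H A ≤ _root_.copyCount H B + (BadF H A B).ncard := by
  classical
  set good : Set A.Subgraph :=
    {C | C ∈ H.copySet A ∧ ∀ u v, C.Adj u v → B.Adj u v} with hgood
  set bad : Set A.Subgraph :=
    {C | C ∈ H.copySet A ∧ ∃ u v, C.Adj u v ∧ ¬ B.Adj u v} with hbad
  have hsub : H.copySet A ⊆ good ∪ bad := by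
    intro C hC
    by_cases h : ∀ u v, C.Adj u v → B.Adj u v
    · exact Or.inl ⟨hC, h⟩
    · push_neg at h
      obtain ⟨u, v, h1, h2⟩ := h
      exact Or.inr ⟨hC, u, v, h1, h2⟩
  have h1 : _root_.copyCount H A ≤ good.ncard + bad.ncard :=
    (Set.ncard_le_ncard hsub (Set.toFinite _)).trans (Set.ncard_union_le _ _)
  have h2 : good.ncard ≤ _root_.copyCount H B := by
    rw [_root_.copyCount, ← Nat.card_coe_set_eq, ← Nat.card_coe_set_eq]
    refine Nat.card_le_card_of_injective
      (fun C => (⟨⟨(C : A.Subgraph).verts, (C : A.Subgraph).Adj,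
        fun {u v} h => C.2.2 u v h, (C : A.Subgraph).edge_vert, (C : A.Subgraph).symm⟩,
        C.2.1⟩ : H.copySet B)) ?_
    intro C C' h
    have h' := Subtype.ext_iff.mp h
    have hv := congrArg SimpleGraph.Subgraph.verts h'
    have ha := congrArg SimpleGraph.Subgraph.Adj h'
    exact Subtype.ext (SimpleGraph.Subgraph.ext hv ha)
  have h3 : bad.ncard ≤ (BadF H A B).ncard := by
    rw [← Nat.card_coe_set_eq, ← Nat.card_coe_set_eq]
    refine Nat.card_le_card_of_injective
      (fun C => (⟨copyFun H A ⟨C.1, C.2.1⟩, ?_⟩ : BadF H A B)) ?_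
    · obtain ⟨u, v, huv, hB⟩ := C.2.2
      obtain ⟨x, y, hxy, hfx, hfy⟩ := (copy_adj_iff ⟨C.1, C.2.1⟩ u v).mp huv
      exact ⟨x, y, hxy, by rw [hfx, hfy]; exact ⟨(C : A.Subgraph).adj_sub huv, hB⟩⟩
    · intro C C' h
      have h2 := copyFun_inj (Subtype.ext_iff.mp h)
      have h3 := Subtype.ext_iff.mp h2
      exact Subtype.ext h3
  omega

lemma count_le_of_no_edges (hno : ∀ x y, ¬ H.Adj x y) :
    _root_.copyCount H A ≤ _root_.copyCount H B := by
  have h := count_le H A B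
  have hempty : BadF H A B = ∅ := by
    rw [Set.eq_empty_iff_forall_notMem]
    rintro f ⟨x, y, hxy, -⟩
    exact hno x y hxy
  rw [hempty, Set.ncard_empty] at h
  omega

lemma ordered_pairs_bound :
    {q : Fin n × Fin n | A.Adj q.1 q.2 ∧ ¬ B.Adj q.1 q.2}.ncard ≤
      (A.edgeSet \ B.edgeSet).ncard * 2 := by
  classical
  rw [← Nat.card_coe_set_eq]
  have hcard : (A.edgeSet \ B.edgeSet).ncard * 2
      = Nat.card (↥(A.edgeSet \ B.edgeSet) × Bool) := by
    rw [Nat.card_prod, Nat.card_coe_set_eq]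
    simp [Nat.card_eq_fintype_card]
  rw [hcard]
  refine Nat.card_le_card_of_injective
    (fun q => (⟨s(q.1.1, q.1.2), ⟨(A.mem_edgeSet).mpr q.2.1,
        fun hc => q.2.2 ((B.mem_edgeSet).mp hc)⟩⟩, decide (q.1.1 ≤ q.1.2))) ?_
  intro q q' h
  have h1 := congrArg Prod.fst h
  have h2 := congrArg Prod.snd h
  have h1' := Subtype.ext_iff.mp h1
  simp only at h1' h2
  have hne : q.1.1 ≠ q.1.2 := (q.2.1).ne
  rw [Sym2.eq_iff] at h1'
  rcases h1' with ⟨ha, hb⟩ | ⟨ha, hb⟩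
  · exact Subtype.ext (Prod.ext ha hb)
  · exfalso
    have hd : (q.1.1 ≤ q.1.2) ↔ (q'.1.1 ≤ q'.1.2) := by
      constructor <;> intro hh <;> [exact of_decide_eq_true (h2 ▸ decide_eq_true hh);
        exact of_decide_eq_true (h2.symm ▸ decide_eq_true hh)]
    rw [← ha, ← hb] at hd
    rcases le_or_gt q.1.1 q.1.2 with hle | hlt
    · exact hne (le_antisymm hle (hd.mp hle))
    · exact hne (le_antisymm (hd.mpr hlt.le) hlt.le)

lemma pair_bound (p : α × α) :
    {f : α → Fin n | H.Adj p.1 p.2 ∧ A.Adj (f p.1) (f p.2) ∧ ¬ B.Adj (f p.1) (f p.2)}.ncard ≤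
      (A.edgeSet \ B.edgeSet).ncard * 2 * n ^ (Fintype.card α - 2) := by
  classical
  by_cases hadj : H.Adj p.1 p.2
  · set D : Set (Fin n × Fin n) := {q | A.Adj q.1 q.2 ∧ ¬ B.Adj q.1 q.2} with hD
    set c : Finset α := ({p.1, p.2} : Finset α)ᶜ with hc
    have hcard : Nat.card (↥D × (c → Fin n)) = D.ncard * n ^ (Fintype.card α - 2) := by
      rw [Nat.card_prod, Nat.card_coe_set_eq, Nat.card_fun]
      congr 1
      rw [Nat.card_eq_fintype_card, Nat.card_eq_fintype_card, Fintype.card_fin,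
        Fintype.card_coe, hc, Finset.card_compl, Finset.card_pair hadj.ne]
    have step : {f : α → Fin n |
        H.Adj p.1 p.2 ∧ A.Adj (f p.1) (f p.2) ∧ ¬ B.Adj (f p.1) (f p.2)}.ncard ≤
        Nat.card (↥D × (c → Fin n)) := by
      rw [← Nat.card_coe_set_eq]
      refine Nat.card_le_card_of_injective
        (fun f => (⟨(f.1 p.1, f.1 p.2), ⟨f.2.2.1, f.2.2.2⟩⟩, fun z => f.1 z.1)) ?_
      intro f g h
      have h1 := congrArg Prod.fst h
      have h2 := congrArg Prod.snd h
      have h1' := Subtype.ext_iff.mp h1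
      simp only at h1' h2
      refine Subtype.ext (funext fun z => ?_)
      by_cases hz1 : z = p.1
      · subst hz1; exact congrArg Prod.fst h1'
      by_cases hz2 : z = p.2
      · subst hz2; exact congrArg Prod.snd h1'
      · have hzc : z ∈ c := by simp [hc, hz1, hz2]
        exact congrFun h2 ⟨z, hzc⟩
    calc _ ≤ Nat.card (↥D × (c → Fin n)) := step
      _ = D.ncard * n ^ (Fintype.card α - 2) := hcard
      _ ≤ (A.edgeSet \ B.edgeSet).ncard * 2 * n ^ (Fintype.card α - 2) :=
        Nat.mul_le_mul_right _ (ordered_pairs_bound A B)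
  · have hempty : {f : α → Fin n |
        H.Adj p.1 p.2 ∧ A.Adj (f p.1) (f p.2) ∧ ¬ B.Adj (f p.1) (f p.2)} = ∅ := by
      rw [Set.eq_empty_iff_forall_notMem]; rintro f ⟨h, -⟩; exact hadj h
    rw [hempty, Set.ncard_empty]
    exact Nat.zero_le _

lemma badF_bound :
    (BadF H A B).ncard ≤ Fintype.card α * Fintype.card α *
      ((A.edgeSet \ B.edgeSet).ncard * 2 * n ^ (Fintype.card α - 2)) := by
  classical
  have hsub : BadF H A B ⊆ ⋃ p ∈ (Finset.univ : Finset (α × α)),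
      {f : α → Fin n | H.Adj p.1 p.2 ∧ A.Adj (f p.1) (f p.2) ∧ ¬ B.Adj (f p.1) (f p.2)} := by
    rintro f ⟨x, y, hxy, hA, hB⟩
    exact Set.mem_biUnion (Finset.mem_univ (x, y)) ⟨hxy, hA, hB⟩
  calc (BadF H A B).ncard ≤ _ := Set.ncard_le_ncard hsub (Set.toFinite _)
    _ ≤ ∑ p ∈ (Finset.univ : Finset (α × α)), ({f : α → Fin n |
          H.Adj p.1 p.2 ∧ A.Adj (f p.1) (f p.2) ∧ ¬ B.Adj (f p.1) (f p.2)}).ncard :=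
        ncard_biUnion_le _ _
    _ ≤ (Finset.univ : Finset (α × α)).card •
          ((A.edgeSet \ B.edgeSet).ncard * 2 * n ^ (Fintype.card α - 2)) :=
        Finset.sum_le_card_nsmul _ _ _ (fun p _ => pair_bound H A B p)
    _ = _ := by
        rw [smul_eq_mul, Finset.card_univ, Fintype.card_prod]

end Counting

lemma squeeze_littleO {f u g : ℕ → ℝ} (h0 : ∀ n, 0 ≤ f n) (h1 : ∀ n, f n ≤ u n)
    (hu : u =o[atTop] g) : f =o[atTop] g := by
  refine (Asymptotics.isBigO_of_le atTop fun n => ?_).trans_isLittleO hu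
  rw [Real.norm_eq_abs, Real.norm_eq_abs, abs_of_nonneg (h0 n)]
  exact (h1 n).trans (le_abs_self _)

lemma mul_pow_littleO {d : ℕ → ℝ} (hd : d =o[atTop] fun n : ℕ => (n : ℝ) ^ 2)
    {a : ℕ} (ha : 2 ≤ a) (c : ℝ) :
    (fun n : ℕ => c * (d n * (n : ℝ) ^ (a - 2))) =o[atTop] fun n : ℕ => (n : ℝ) ^ a := by
  have h1 : (fun n : ℕ => d n * (n : ℝ) ^ (a - 2)) =o[atTop]
      fun n : ℕ => (n : ℝ) ^ 2 * (n : ℝ) ^ (a - 2) := hd.mul_isBigO (isBigO_refl _ _)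
  have h2 : (fun n : ℕ => (n : ℝ) ^ 2 * (n : ℝ) ^ (a - 2)) = fun n : ℕ => (n : ℝ) ^ a := by
    funext n; rw [← pow_add]; congr 1; omega
  rw [h2] at h1
  exact h1.const_mul_left c

lemma editDist_triangle {V : Type*} [Finite V] (A B C : SimpleGraph V) :
    editDist A C ≤ editDist A B + editDist B C := by
  have h : symmDiff A.edgeSet C.edgeSet ⊆
      symmDiff A.edgeSet B.edgeSet ∪ symmDiff B.edgeSet C.edgeSet := symmDiff_triangle _ _ _
  exact (Set.ncard_le_ncard h (Set.toFinite _)).trans (Set.ncard_union_le _ _)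

lemma editDist_of_le {V : Type*} [Finite V] {A B : SimpleGraph V} (h : B ≤ A) :
    editDist A B = (A.edgeSet \ B.edgeSet).ncard := by
  rw [editDist, symmDiff_of_ge (SimpleGraph.edgeSet_mono h)]

lemma sdiff_subset_symmDiff {X : Type*} (s t : Set X) : s \ t ⊆ symmDiff s t := by
  rw [symmDiff_def]; exact le_sup_left

theorem stmt15 {α β : Type*} [Fintype α] [Fintype β] (k : ℕ)
    (H : SimpleGraph α) (F : SimpleGraph β)
    (hχF : F.chromaticNumber = ((k : ℕ∞) + 1))
    -- `H` is weakly asymptotically `F`-Turán-good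
    (T₀ : (n : ℕ) → SimpleGraph (Fin n))
    (hT₀ : ∀ n, IsCompleteMultipartite k (T₀ n))
    (hgood : (fun n : ℕ => (exGen n H F : ℝ) - (_root_.copyCount H (T₀ n) : ℝ))
        =o[atTop] fun n : ℕ => (_root_.copyCount H (T₀ n) : ℝ))
    -- `H` is weakly `K_{k+1}`-Turán-stable
    (hstable : ∀ G : (n : ℕ) → SimpleGraph (Fin n),
        (∀ n, FFree (completeGraph (Fin (k + 1))) (G n)) →
        ((fun n : ℕ => (exGen n H (completeGraph (Fin (k + 1))) : ℝ) - (_root_.copyCount H (G n) : ℝ))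
            =o[atTop] fun n : ℕ => (n : ℝ) ^ (Fintype.card α)) →
        ∃ T : (n : ℕ) → SimpleGraph (Fin n), (∀ n, IsCompleteMultipartite k (T n)) ∧
          (fun n : ℕ => (editDist (G n) (T n) : ℝ)) =o[atTop] fun n : ℕ => (n : ℝ) ^ 2)
    -- the graph removal lemma for `K_{k+1}`
    (hremoval : ∀ G : (n : ℕ) → SimpleGraph (Fin n),
        ((fun n : ℕ => (_root_.copyCount (completeGraph (Fin (k + 1))) (G n) : ℝ))
            =o[atTop] fun n : ℕ => (n : ℝ) ^ (k + 1)) →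
        ∃ G' : (n : ℕ) → SimpleGraph (Fin n), (∀ n, G' n ≤ G n) ∧
          (∀ n, FFree (completeGraph (Fin (k + 1))) (G' n)) ∧
          (fun n : ℕ => (((G n).edgeSet \ (G' n).edgeSet).ncard : ℝ))
            =o[atTop] fun n : ℕ => (n : ℝ) ^ 2)
    -- `ex(n, K_{k+1}, F) = o(n^{k+1})`
    (hexK : (fun n : ℕ => (exGen n (completeGraph (Fin (k + 1))) F : ℝ))
        =o[atTop] fun n : ℕ => (n : ℝ) ^ (k + 1))
    -- a sequence of `F`-free graphs with almost extremally many copies of `H`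
    (G : (n : ℕ) → SimpleGraph (Fin n)) (hGfree : ∀ n, FFree F (G n))
    (hGmany : (fun n : ℕ => (exGen n H F : ℝ) - (_root_.copyCount H (G n) : ℝ))
        =o[atTop] fun n : ℕ => (n : ℝ) ^ (Fintype.card α)) :
    ∃ T : (n : ℕ) → SimpleGraph (Fin n), (∀ n, IsCompleteMultipartite k (T n)) ∧
      (fun n : ℕ => (editDist (G n) (T n) : ℝ)) =o[atTop] fun n : ℕ => (n : ℝ) ^ 2 := by
  classical
  set K : SimpleGraph (Fin (k + 1)) := completeGraph (Fin (k + 1)) with hKdef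
  -- `k ≥ 1`
  obtain ⟨p₀, -⟩ := hT₀ 1
  have hk : 0 < k := Fin.pos_iff_nonempty.mpr ⟨p₀ ⟨0, one_pos⟩⟩
  -- `K` has an edge
  have hKedge : K.Adj ⟨0, Nat.succ_pos k⟩ ⟨1, by omega⟩ := by
    simp [hKdef, completeGraph, Fin.ext_iff]
  -- an extremal `K`-free sequence `W`
  have hWex : ∀ n, ∃ Gx : SimpleGraph (Fin n), FFree K Gx ∧ _root_.copyCount H Gx = exGen n H K :=
    fun n => exGen_attained H K ⟨⊥, bot_ffree hKedge n⟩
  choose W hWfree hWcount using hWex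
  -- apply stability to `W`
  have hWo : (fun n : ℕ => (exGen n H K : ℝ) - (_root_.copyCount H (W n) : ℝ)) =o[atTop]
      fun n : ℕ => (n : ℝ) ^ (Fintype.card α) := by
    have h : (fun n : ℕ => (exGen n H K : ℝ) - (_root_.copyCount H (W n) : ℝ)) = fun _ => (0 : ℝ) :=
      funext fun n => by rw [hWcount n, sub_self]
    rw [h]; exact isLittleO_zero _ _
  obtain ⟨T'', hT''cmp, hT''ed⟩ := hstable W hWfree hWo
  have hT''free : ∀ n, FFree F (T'' n) := fun n => cmp_ffree hχF (hT''cmp n)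
  -- `G` has few copies of `K`
  have hGK : (fun n : ℕ => (_root_.copyCount K (G n) : ℝ)) =o[atTop]
      fun n : ℕ => (n : ℝ) ^ (k + 1) := by
    refine (Asymptotics.isBigO_of_le atTop fun n => ?_).trans_isLittleO hexK
    rw [Real.norm_eq_abs, Real.norm_eq_abs, abs_of_nonneg (by positivity),
      abs_of_nonneg (by positivity)]
    exact_mod_cast copyCount_le_exGen K F (G n) (hGfree n)
  obtain ⟨G', hle, hfree', hdel⟩ := hremoval G hGK
  -- the key estimate
  have hkey : (fun n : ℕ => (exGen n H K : ℝ) - (_root_.copyCount H (G' n) : ℝ)) =o[atTop]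
      fun n : ℕ => (n : ℝ) ^ (Fintype.card α) := by
    have h0 : ∀ n, (0 : ℝ) ≤ (exGen n H K : ℝ) - _root_.copyCount H (G' n) := fun n => by
      rw [sub_nonneg]
      exact_mod_cast copyCount_le_exGen H K (G' n) (hfree' n)
    by_cases ha : 2 ≤ Fintype.card α
    · set a := Fintype.card α with hadef
      have hb1 : ∀ n, exGen n H K ≤ exGen n H F +
          a * a * (editDist (W n) (T'' n) * 2 * n ^ (a - 2)) := fun n => by
        have c2 := badF_bound H (W n) (T'' n)
        have c3 : ((W n).edgeSet \ (T'' n).edgeSet).ncard ≤ editDist (W n) (T'' n) :=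
          Set.ncard_le_ncard (sdiff_subset_symmDiff _ _) (Set.toFinite _)
        have c4 := copyCount_le_exGen H F (T'' n) (hT''free n)
        calc exGen n H K = _root_.copyCount H (W n) := (hWcount n).symm
          _ ≤ _root_.copyCount H (T'' n) + (BadF H (W n) (T'' n)).ncard := count_le H (W n) (T'' n)
          _ ≤ exGen n H F +
              a * a * (((W n).edgeSet \ (T'' n).edgeSet).ncard * 2 * n ^ (a - 2)) :=
            Nat.add_le_add c4 c2
          _ ≤ _ := Nat.add_le_add_left (Nat.mul_le_mul_left _
              (Nat.mul_le_mul_right _ (Nat.mul_le_mul_right _ c3))) _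
      have hb3 : ∀ n, _root_.copyCount H (G n) ≤ _root_.copyCount H (G' n) +
          a * a * ((((G n).edgeSet \ (G' n).edgeSet).ncard) * 2 * n ^ (a - 2)) := fun n =>
        (count_le H (G n) (G' n)).trans
          (Nat.add_le_add_left (badF_bound H (G n) (G' n)) _)
      set u : ℕ → ℝ := fun n =>
        ((a : ℝ) * a * 2) * ((editDist (W n) (T'' n) : ℝ) * (n : ℝ) ^ (a - 2)) +
        ((exGen n H F : ℝ) - _root_.copyCount H (G n)) +
        ((a : ℝ) * a * 2) * (((((G n).edgeSet \ (G' n).edgeSet).ncard) : ℝ) *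
          (n : ℝ) ^ (a - 2)) with hudef
      have h1 : ∀ n, (exGen n H K : ℝ) - _root_.copyCount H (G' n) ≤ u n := fun n => by
        have r1 : (exGen n H K : ℝ) ≤ (exGen n H F : ℝ) +
            (a : ℝ) * a * ((editDist (W n) (T'' n) : ℝ) * 2 * (n : ℝ) ^ (a - 2)) := by
          exact_mod_cast hb1 n
        have r2 : (_root_.copyCount H (G n) : ℝ) ≤ (_root_.copyCount H (G' n) : ℝ) +
            (a : ℝ) * a * (((((G n).edgeSet \ (G' n).edgeSet).ncard) : ℝ) * 2 *
              (n : ℝ) ^ (a - 2)) := by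
          exact_mod_cast hb3 n
        have e1 : (a : ℝ) * a * ((editDist (W n) (T'' n) : ℝ) * 2 * (n : ℝ) ^ (a - 2)) =
            ((a : ℝ) * a * 2) * ((editDist (W n) (T'' n) : ℝ) * (n : ℝ) ^ (a - 2)) := by ring
        have e2 : (a : ℝ) * a * (((((G n).edgeSet \ (G' n).edgeSet).ncard) : ℝ) * 2 *
              (n : ℝ) ^ (a - 2)) =
            ((a : ℝ) * a * 2) * (((((G n).edgeSet \ (G' n).edgeSet).ncard) : ℝ) *
              (n : ℝ) ^ (a - 2)) := by ring
        rw [hudef]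
        simp only
        linarith [r1, r2, e1.symm.le, e2.symm.le, e1.le, e2.le]
      have hu : u =o[atTop] (fun n : ℕ => (n : ℝ) ^ a) := by
        have p1 := mul_pow_littleO hT''ed ha ((a : ℝ) * a * 2)
        have p3 := mul_pow_littleO hdel ha ((a : ℝ) * a * 2)
        exact (p1.add hGmany).add p3
      exact squeeze_littleO h0 h1 hu
    · have hno : ∀ x y, ¬ H.Adj x y := by
        intro x y h
        refine ha ?_
        have h2 := Finset.card_le_univ ({x, y} : Finset α)
        rwa [Finset.card_pair h.ne] at h2
      have h1 : ∀ n, (exGen n H K : ℝ) - _root_.copyCount H (G' n) ≤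
          (exGen n H F : ℝ) - _root_.copyCount H (G n) := fun n => by
        have c1 : exGen n H K ≤ exGen n H F :=
          calc exGen n H K = _root_.copyCount H (W n) := (hWcount n).symm
            _ ≤ _root_.copyCount H (T'' n) := count_le_of_no_edges H (W n) (T'' n) hno
            _ ≤ exGen n H F := copyCount_le_exGen H F (T'' n) (hT''free n)
        have c2 : _root_.copyCount H (G n) ≤ _root_.copyCount H (G' n) :=
          count_le_of_no_edges H (G n) (G' n) hno
        have c1' : (exGen n H K : ℝ) ≤ exGen n H F := by exact_mod_cast c1
        have c2' : (_root_.copyCount H (G n) : ℝ) ≤ _root_.copyCount H (G' n) := by exact_mod_cast c2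
        linarith
      exact squeeze_littleO h0 h1 hGmany
  -- apply stability to `G'` and transfer back to `G`
  obtain ⟨T, hTcmp, hTed⟩ := hstable G' hfree' hkey
  refine ⟨T, hTcmp, ?_⟩
  have htri : ∀ n, (editDist (G n) (T n) : ℝ) ≤
      ((((G n).edgeSet \ (G' n).edgeSet).ncard : ℝ)) + (editDist (G' n) (T n) : ℝ) := fun n => by
    have t1 : editDist (G n) (T n) ≤ editDist (G n) (G' n) + editDist (G' n) (T n) :=
      editDist_triangle _ _ _
    have t2 : editDist (G n) (G' n) = ((G n).edgeSet \ (G' n).edgeSet).ncard :=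
      editDist_of_le (hle n)
    rw [t2] at t1
    exact_mod_cast t1
  exact squeeze_littleO (fun n => by positivity) htri (hdel.add hTed)
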